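/- Fix a nonzero complex number ℏ and complex numbers δ, δ′, c, and on holomorphic functions f of (u,v) ∈ ℂ² define the first-order differential operators L_u f = u f + (iℏ/2)(δ ∂_u f + (c−1) ∂_v f), L_v f = v f + (iℏ/2)((c+1) ∂_u f + δ′ ∂_v f), R_u f = u f + (iℏ/2)(δ ∂_u f + (c+1) ∂_v f), R_v f = v f + (iℏ/2)((c−1) ∂_u f + δ′ ∂_v f). Assume (1+c)² ≠ δδ′ and (1−c)² ≠ δδ′ and set ϖ₀₀(u,v) = exp( (1/(iℏ))·(δ′u² − 2(1+c)uv + δv²)/((1+c)² − δδ′) ) and ϖ̄₀₀(u,v) = exp( (1/(iℏ))·(δ′u² + 2(1−c)uv + δv²)/((1−c)² − δδ′) ). Then L_v ϖ₀₀ = 0, R_u ϖ₀₀ = 0, L_u ϖ̄₀₀ = 0 and R_v ϖ̄₀₀ = 0. -/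

import Mathlib

open Complex

lemma hasDerivAt_exp_quad (a b k u : ℂ) :
    HasDerivAt (fun x => Complex.exp (a * x ^ 2 + b * x + k))
      ((2 * a * u + b) * Complex.exp (a * u ^ 2 + b * u + k)) u := by
  have h : HasDerivAt (fun x : ℂ => a * x ^ 2 + b * x + k) (2 * a * u + b) u := by
    have h1 := ((hasDerivAt_pow 2 u).const_mul a)
    have h2 := ((hasDerivAt_id u).const_mul b)
    have := (h1.add h2).add_const k
    refine this.congr_deriv ?_
    simp [pow_one]
    ring
  simpa [mul_comm] using h.cexp

lemma deriv_exp_quad (a b k u : ℂ) (f : ℂ → ℂ)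
    (hf : ∀ x, f x = Complex.exp (a * x ^ 2 + b * x + k)) :
    deriv f u = (2 * a * u + b) * f u := by
  have hfe : f = fun x => Complex.exp (a * x ^ 2 + b * x + k) := funext hf
  rw [hfe, (hasDerivAt_exp_quad a b k u).deriv]

/-- `K`-ordered expression of left ∗-multiplication by `u`. -/
noncomputable def Lu (ℏ δ δ' c : ℂ) (f : ℂ → ℂ → ℂ) (u v : ℂ) : ℂ :=
  u * f u v + (Complex.I * ℏ / 2) *
    (δ * deriv (fun x => f x v) u + (c - 1) * deriv (fun y => f u y) v)

/-- `K`-ordered expression of left ∗-multiplication by `v`. -/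
noncomputable def Lv (ℏ δ δ' c : ℂ) (f : ℂ → ℂ → ℂ) (u v : ℂ) : ℂ :=
  v * f u v + (Complex.I * ℏ / 2) *
    ((c + 1) * deriv (fun x => f x v) u + δ' * deriv (fun y => f u y) v)

/-- `K`-ordered expression of right ∗-multiplication by `u`. -/
noncomputable def Ru (ℏ δ δ' c : ℂ) (f : ℂ → ℂ → ℂ) (u v : ℂ) : ℂ :=
  u * f u v + (Complex.I * ℏ / 2) *
    (δ * deriv (fun x => f x v) u + (c + 1) * deriv (fun y => f u y) v)

/-- `K`-ordered expression of right ∗-multiplication by `v`. -/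
noncomputable def Rv (ℏ δ δ' c : ℂ) (f : ℂ → ℂ → ℂ) (u v : ℂ) : ℂ :=
  v * f u v + (Complex.I * ℏ / 2) *
    ((c - 1) * deriv (fun x => f x v) u + δ' * deriv (fun y => f u y) v)

set_option maxHeartbeats 1600000 in
/-- For the `K`-ordered expressions `ϖ₀₀` and `ϖ̄₀₀` of the vacuum and bar-vacuum,
one has `v∗ϖ₀₀ = 0 = ϖ₀₀∗u` and `u∗ϖ̄₀₀ = 0 = ϖ̄₀₀∗v` in the `K`-ordered expression:
`L_v ϖ₀₀ = 0`, `R_u ϖ₀₀ = 0`, `L_u ϖ̄₀₀ = 0`, `R_v ϖ̄₀₀ = 0`. -/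
theorem statement6 (ℏ δ δ' c : ℂ) (hℏ : ℏ ≠ 0)
    (h1 : (1 + c) ^ 2 ≠ δ * δ') (h2 : (1 - c) ^ 2 ≠ δ * δ')
    (ϖ ϖbar : ℂ → ℂ → ℂ)
    (hϖ : ∀ u v, ϖ u v = exp ((1 / (Complex.I * ℏ)) *
      (δ' * u ^ 2 - 2 * (1 + c) * u * v + δ * v ^ 2) / ((1 + c) ^ 2 - δ * δ')))
    (hϖbar : ∀ u v, ϖbar u v = exp ((1 / (Complex.I * ℏ)) *
      (δ' * u ^ 2 + 2 * (1 - c) * u * v + δ * v ^ 2) / ((1 - c) ^ 2 - δ * δ'))) :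
    (∀ u v : ℂ, Lv ℏ δ δ' c ϖ u v = 0) ∧
    (∀ u v : ℂ, Ru ℏ δ δ' c ϖ u v = 0) ∧
    (∀ u v : ℂ, Lu ℏ δ δ' c ϖbar u v = 0) ∧
    (∀ u v : ℂ, Rv ℏ δ δ' c ϖbar u v = 0) := by
  have hI : Complex.I * ℏ ≠ 0 := mul_ne_zero Complex.I_ne_zero hℏ
  have hD1 : (1 + c) ^ 2 - δ * δ' ≠ 0 := sub_ne_zero.mpr h1
  have hD2 : (1 - c) ^ 2 - δ * δ' ≠ 0 := sub_ne_zero.mpr h2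
  -- partial derivatives of ϖ
  have du1 : ∀ u v : ℂ, deriv (fun x => ϖ x v) u =
      (2 * (δ' / (Complex.I * ℏ * ((1 + c) ^ 2 - δ * δ'))) * u
        + (-2 * (1 + c) * v / (Complex.I * ℏ * ((1 + c) ^ 2 - δ * δ')))) * ϖ u v := by
    intro u v
    exact deriv_exp_quad _ _ (δ * v ^ 2 / (Complex.I * ℏ * ((1 + c) ^ 2 - δ * δ'))) u _
      (fun x => by rw [hϖ]; congr 1; field_simp [hI, hD1, hD2]; ring)
  have dv1 : ∀ u v : ℂ, deriv (fun y => ϖ u y) v =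
      (2 * (δ / (Complex.I * ℏ * ((1 + c) ^ 2 - δ * δ'))) * v
        + (-2 * (1 + c) * u / (Complex.I * ℏ * ((1 + c) ^ 2 - δ * δ')))) * ϖ u v := by
    intro u v
    exact deriv_exp_quad _ _ (δ' * u ^ 2 / (Complex.I * ℏ * ((1 + c) ^ 2 - δ * δ'))) v _
      (fun y => by rw [hϖ]; congr 1; field_simp [hI, hD1, hD2]; ring)
  have du2 : ∀ u v : ℂ, deriv (fun x => ϖbar x v) u =
      (2 * (δ' / (Complex.I * ℏ * ((1 - c) ^ 2 - δ * δ'))) * u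
        + (2 * (1 - c) * v / (Complex.I * ℏ * ((1 - c) ^ 2 - δ * δ')))) * ϖbar u v := by
    intro u v
    exact deriv_exp_quad _ _ (δ * v ^ 2 / (Complex.I * ℏ * ((1 - c) ^ 2 - δ * δ'))) u _
      (fun x => by rw [hϖbar]; congr 1; field_simp [hI, hD1, hD2])
  have dv2 : ∀ u v : ℂ, deriv (fun y => ϖbar u y) v =
      (2 * (δ / (Complex.I * ℏ * ((1 - c) ^ 2 - δ * δ'))) * v
        + (2 * (1 - c) * u / (Complex.I * ℏ * ((1 - c) ^ 2 - δ * δ')))) * ϖbar u v := by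
    intro u v
    exact deriv_exp_quad _ _ (δ' * u ^ 2 / (Complex.I * ℏ * ((1 - c) ^ 2 - δ * δ'))) v _
      (fun y => by rw [hϖbar]; congr 1; field_simp [hI, hD1, hD2]; ring)
  refine ⟨fun u v => ?_, fun u v => ?_, fun u v => ?_, fun u v => ?_⟩
  · have key : v + Complex.I * ℏ / 2 * ((c + 1) *
        (2 * (δ' / (Complex.I * ℏ * ((1 + c) ^ 2 - δ * δ'))) * u
          + (-2 * (1 + c) * v / (Complex.I * ℏ * ((1 + c) ^ 2 - δ * δ'))))
      + δ' * (2 * (δ / (Complex.I * ℏ * ((1 + c) ^ 2 - δ * δ'))) * v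
          + (-2 * (1 + c) * u / (Complex.I * ℏ * ((1 + c) ^ 2 - δ * δ'))))) = 0 := by
      field_simp [hI, hD1, hD2, show (1 + c) ^ 2 - δ' * δ ≠ 0 by rwa [mul_comm δ']]; ring
    rw [Lv, du1, dv1]; linear_combination (ϖ u v) * key
  · have key : u + Complex.I * ℏ / 2 * (δ *
        (2 * (δ' / (Complex.I * ℏ * ((1 + c) ^ 2 - δ * δ'))) * u
          + (-2 * (1 + c) * v / (Complex.I * ℏ * ((1 + c) ^ 2 - δ * δ'))))
      + (c + 1) * (2 * (δ / (Complex.I * ℏ * ((1 + c) ^ 2 - δ * δ'))) * v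
          + (-2 * (1 + c) * u / (Complex.I * ℏ * ((1 + c) ^ 2 - δ * δ'))))) = 0 := by
      field_simp [hI, hD1, hD2, show (1 + c) ^ 2 - δ' * δ ≠ 0 by rwa [mul_comm δ']]; ring
    rw [Ru, du1, dv1]; linear_combination (ϖ u v) * key
  · have key : u + Complex.I * ℏ / 2 * (δ *
        (2 * (δ' / (Complex.I * ℏ * ((1 - c) ^ 2 - δ * δ'))) * u
          + (2 * (1 - c) * v / (Complex.I * ℏ * ((1 - c) ^ 2 - δ * δ'))))
      + (c - 1) * (2 * (δ / (Complex.I * ℏ * ((1 - c) ^ 2 - δ * δ'))) * v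
          + (2 * (1 - c) * u / (Complex.I * ℏ * ((1 - c) ^ 2 - δ * δ'))))) = 0 := by
      field_simp [hI, hD1, hD2, show (1 - c) ^ 2 - δ' * δ ≠ 0 by rwa [mul_comm δ']]; ring
    rw [Lu, du2, dv2]; linear_combination (ϖbar u v) * key
  · have key : v + Complex.I * ℏ / 2 * ((c - 1) *
        (2 * (δ' / (Complex.I * ℏ * ((1 - c) ^ 2 - δ * δ'))) * u
          + (2 * (1 - c) * v / (Complex.I * ℏ * ((1 - c) ^ 2 - δ * δ'))))
      + δ' * (2 * (δ / (Complex.I * ℏ * ((1 - c) ^ 2 - δ * δ'))) * v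
          + (2 * (1 - c) * u / (Complex.I * ℏ * ((1 - c) ^ 2 - δ * δ'))))) = 0 := by
      field_simp [hI, hD1, hD2, show (1 - c) ^ 2 - δ' * δ ≠ 0 by rwa [mul_comm δ']]; ring
    rw [Rv, du2, dv2]; linear_combination (ϖbar u v) * key
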